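/- Let σ be one of the semantics complete, grounded, preferred, stable, or semi-stable, let AF = (Ar, att) be a finite abstract argumentation framework, and let S be a σ-stratified labeling of AF. If A ∈ Ar is unattacked, then S(A) = 0; consequently S(A) ≤ S(B) for every B ∈ Ar. (The ordinal σ-stratified semantics satisfies Weak Void Precedence*.) -/

import Mathlib

/-- Labels for arguments: in, out, undecided. -/
inductive Lab : Type where
  | argIn | argOut | argUndec
  deriving DecidableEq

/-- The set of arguments in `C` labeled `in` by `L`. -/
def inSet {α : Type*} (C : Set α) (L : α → Lab) : Set α := {a ∈ C | L a = Lab.argIn}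

/-- The set of arguments in `C` labeled `undec` by `L`. -/
def undecSet {α : Type*} (C : Set α) (L : α → Lab) : Set α := {a ∈ C | L a = Lab.argUndec}

/-- `L` is a complete labeling of the subframework of `att` on the set `C` of arguments. -/
def IsCompleteLab {α : Type*} (att : α → α → Prop) (C : Set α) (L : α → Lab) : Prop :=
  (∀ a ∈ C, L a = Lab.argOut → ∃ b ∈ C, L b = Lab.argIn ∧ att b a) ∧
  (∀ a ∈ C, L a = Lab.argIn → ∀ b ∈ C, att b a → L b = Lab.argOut) ∧
  (∀ a ∈ C, L a = Lab.argUndec →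
    (∀ b ∈ C, att b a → L b ≠ Lab.argIn) ∧ (∃ b ∈ C, att b a ∧ L b ≠ Lab.argOut))

/-- The five semantics considered. -/
inductive Sem : Type where
  | complete | grounded | preferred | stable | semiStable

/-- `SemLab σ att C L` : `L` is a `σ`-labeling of the subframework of `att` on `C`. -/
def SemLab {α : Type*} : Sem → (α → α → Prop) → Set α → (α → Lab) → Prop
  | Sem.complete, att, C, L => IsCompleteLab att C L
  | Sem.grounded, att, C, L => IsCompleteLab att C L ∧
      ∀ L', IsCompleteLab att C L' → inSet C L' ⊆ inSet C L → inSet C L ⊆ inSet C L'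
  | Sem.preferred, att, C, L => IsCompleteLab att C L ∧
      ∀ L', IsCompleteLab att C L' → inSet C L ⊆ inSet C L' → inSet C L' ⊆ inSet C L
  | Sem.stable, att, C, L => IsCompleteLab att C L ∧ undecSet C L = ∅
  | Sem.semiStable, att, C, L => IsCompleteLab att C L ∧
      ∀ L', IsCompleteLab att C L' → undecSet C L' ⊆ undecSet C L → undecSet C L ⊆ undecSet C L'

/-- `Stratified σ att C S` : `S` is a `σ`-stratified labeling of the subframework of `att`
on the set `C` of arguments (values of `S` outside `C` are irrelevant). -/
inductive Stratified {α : Type*} (σ : Sem) (att : α → α → Prop) : Set α → (α → ℕ∞) → Prop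
  | ofEmpty {C : Set α} {S : α → ℕ∞} (L : α → Lab)
      (hL : SemLab σ att C L) (hin : inSet C L = ∅)
      (hS : ∀ a ∈ C, S a = ⊤) : Stratified σ att C S
  | ofStep {C : Set α} {S : α → ℕ∞} (L : α → Lab) (S' : α → ℕ∞)
      (hL : SemLab σ att C L) (hin : (inSet C L).Nonempty)
      (hS' : Stratified σ att (C \ inSet C L) S')
      (h0 : ∀ a ∈ inSet C L, S a = 0)
      (h1 : ∀ a ∈ C \ inSet C L, S a = 1 + S' a) :
      Stratified σ att C S

lemma semLab_complete {α : Type*} {σ : Sem} {att : α → α → Prop} {C : Set α} {L : α → Lab}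
    (h : SemLab σ att C L) : IsCompleteLab att C L := by
  cases σ <;> first | exact h | exact h.1

lemma unattacked_in {α : Type*} {att : α → α → Prop} {C : Set α} {L : α → Lab}
    (hL : IsCompleteLab att C L) {A : α} (hAC : A ∈ C) (hA : ∀ B : α, ¬ att B A) :
    L A = Lab.argIn := by
  rcases h : L A with _ | _ | _
  · rfl
  · obtain ⟨b, -, -, hb⟩ := hL.1 A hAC h
    exact absurd hb (hA b)
  · obtain ⟨b, -, hb, -⟩ := (hL.2.2 A hAC h).2
    exact absurd hb (hA b)

/-- Weak Void Precedence*: In every `σ`-stratified labeling of a finite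
framework, an unattacked argument gets rank `0`, hence a rank less than or equal to that
of any other argument. -/
theorem stratified_weak_void_precedence {α : Type*} [Fintype α] (att : α → α → Prop)
    (σ : Sem) (S : α → ℕ∞) (hS : Stratified σ att Set.univ S)
    (A : α) (hA : ∀ B : α, ¬ att B A) :
    S A = 0 ∧ ∀ B : α, S A ≤ S B := by
  have hSA : S A = 0 := by
    cases hS with
    | ofEmpty L hL hin _ =>
        have : A ∈ inSet Set.univ L :=
          ⟨Set.mem_univ A, unattacked_in (semLab_complete hL) (Set.mem_univ A) hA⟩
        rw [hin] at this
        exact absurd this (Set.notMem_empty A)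
    | ofStep L S' hL hin hS' h0 h1 =>
        exact h0 A ⟨Set.mem_univ A, unattacked_in (semLab_complete hL) (Set.mem_univ A) hA⟩
  exact ⟨hSA, fun B => hSA ▸ zero_le⟩
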